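/- Let G be a finite group with a symmetric subset S (i.e., S = S⁻¹, 1 ∉ S) generating G. If the Cayley graph Cay(G,S) has all eigenvalues integral and is not bipartite, then |G| divides (2|S|-1)!. -/

import Mathlib

open Classical in
/-- Adjacency matrix of the Cayley graph `Cay(G,S)`: `x ~ y` iff `x * y⁻¹ ∈ S`. -/
noncomputable def cayleyMatrix {G : Type*} [Group G] (S : Set G) : Matrix G G ℝ :=
  fun x y => if x * y⁻¹ ∈ S then 1 else 0

/-- All eigenvalues of the real matrix `A` are integers. -/
noncomputable def isIntegralMatrix {n : Type*} [Finite n] (A : Matrix n n ℝ) : Prop :=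
  letI := Fintype.ofFinite n
  letI := Classical.decEq n
  ∀ μ : ℝ, Module.End.HasEigenvalue (Matrix.toLin' A) μ → ∃ z : ℤ, μ = (z : ℝ)

section Aux

variable {G : Type*} [Group G] [Fintype G] (S : Finset G)

open Finset Matrix

lemma cayley_mulVec (v : G → ℝ) (x : G) :
    (cayleyMatrix (S : Set G) *ᵥ v) x = ∑ s ∈ S, v (s⁻¹ * x) := by
  classical
  have hb : Function.Bijective (fun s : G => s⁻¹ * x) := by
    constructor
    · intro a b h; simpa using h
    · intro y; exact ⟨x * y⁻¹, by group⟩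
  have : (cayleyMatrix (S : Set G) *ᵥ v) x
      = ∑ y, (if x * y⁻¹ ∈ S then (1:ℝ) else 0) * v y := by
    simp [Matrix.mulVec, dotProduct, cayleyMatrix]
  rw [this, ← Fintype.sum_bijective (fun s : G => s⁻¹ * x) hb
      (fun s => (if s ∈ S then (1:ℝ) else 0) * v (s⁻¹ * x))
      (fun y => (if x * y⁻¹ ∈ S then (1:ℝ) else 0) * v y)
      (by intro s; have : x * (s⁻¹ * x)⁻¹ = s := by group
          simp [this])]
  simp [ite_mul]

lemma cayley_row_sum (x : G) : ∑ y, cayleyMatrix (S : Set G) x y = S.card := by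
  have := cayley_mulVec S (fun _ => (1:ℝ)) x
  simp only [Matrix.mulVec, dotProduct, mul_one] at this
  simpa using this

lemma invariant_all (hsym : ∀ s ∈ S, s⁻¹ ∈ S)
    (hgen : Subgroup.closure (S : Set G) = ⊤) (P : G → Prop)
    (hP : ∀ x, P x → ∀ s ∈ S, P (s⁻¹ * x)) {x₀ : G} (h0 : P x₀) : ∀ x, P x := by
  have key : ∀ g ∈ Subgroup.closure (S : Set G),
      (∀ x, P x → P (g * x)) ∧ (∀ x, P x → P (g⁻¹ * x)) := by
    intro g hg
    induction hg using Subgroup.closure_induction with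
    | mem s hs =>
      refine ⟨fun x hx => ?_, fun x hx => hP x hx s hs⟩
      have := hP x hx s⁻¹ (hsym s hs)
      simpa using this
    | one => simp
    | mul a b ha hb iha ihb =>
      refine ⟨fun x hx => ?_, fun x hx => ?_⟩
      · rw [mul_assoc]; exact iha.1 _ (ihb.1 x hx)
      · rw [_root_.mul_inv_rev, mul_assoc]; exact ihb.2 _ (iha.2 x hx)
    | inv a ha iha =>
      refine ⟨iha.2, fun x hx => ?_⟩
      have := iha.1 x hx
      simpa using this
  intro x
  have hx : x * x₀⁻¹ ∈ Subgroup.closure (S : Set G) := by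
    rw [hgen]; exact Subgroup.mem_top _
  have := (key _ hx).1 x₀ h0
  simpa using this

/-- Equality case of sum bound on a finset. -/
lemma sum_eq_forall_eq {α : Type*} (s : Finset α) (f : α → ℝ) (B : ℝ)
    (hle : ∀ a ∈ s, f a ≤ B) (hsum : ∑ a ∈ s, f a = s.card * B) :
    ∀ a ∈ s, f a = B := by
  by_contra hne
  push_neg at hne
  obtain ⟨a, ha, hfa⟩ := hne
  have hlt : f a < B := lt_of_le_of_ne (hle a ha) hfa
  have : ∑ a ∈ s, f a < ∑ _a ∈ s, B := Finset.sum_lt_sum hle ⟨a, ha, hlt⟩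
  rw [Finset.sum_const, nsmul_eq_mul] at this
  linarith [hsum]

/-- An eigenvector for the degree is constant. -/
lemma eigen_card_const (hsym : ∀ s ∈ S, s⁻¹ ∈ S)
    (hgen : Subgroup.closure (S : Set G) = ⊤) {v : G → ℝ}
    (hv : cayleyMatrix (S : Set G) *ᵥ v = (S.card : ℝ) • v) : ∀ x y, v x = v y := by
  classical
  obtain ⟨x₀, -, hx₀⟩ := Finset.exists_max_image Finset.univ v ⟨1, Finset.mem_univ 1⟩
  have hall : ∀ x, v x = v x₀ := by
    refine invariant_all S hsym hgen (fun x => v x = v x₀) ?_ rfl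
    intro x hx s hs
    have hsum : ∑ s ∈ S, v (s⁻¹ * x) = (S.card : ℝ) * v x₀ := by
      have := congrFun hv x
      rw [cayley_mulVec] at this
      rw [this, Pi.smul_apply, smul_eq_mul, hx]
    exact sum_eq_forall_eq S (fun s => v (s⁻¹ * x)) (v x₀)
      (fun s _ => hx₀ _ (Finset.mem_univ _)) hsum s hs
  intro x y; rw [hall x, hall y]

lemma eigen_abs_le {μ : ℝ} {v : G → ℝ} (hv0 : v ≠ 0)
    (hv : cayleyMatrix (S : Set G) *ᵥ v = μ • v) : |μ| ≤ S.card := by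
  classical
  obtain ⟨x₀, -, hx₀⟩ := Finset.exists_max_image Finset.univ (fun x => |v x|)
    ⟨1, Finset.mem_univ 1⟩
  have hpos : 0 < |v x₀| := by
    by_contra h
    push_neg at h
    apply hv0
    funext y
    have h1 := hx₀ y (Finset.mem_univ y)
    have := abs_nonneg (v y)
    simpa using le_antisymm (le_trans h1 h) (by positivity)
  have hμ : |μ| * |v x₀| ≤ (S.card : ℝ) * |v x₀| := by
    have h1 : μ * v x₀ = ∑ s ∈ S, v (s⁻¹ * x₀) := by
      have := congrFun hv x₀
      rw [cayley_mulVec] at this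
      rw [this]; simp
    calc |μ| * |v x₀| = |μ * v x₀| := (abs_mul μ (v x₀)).symm
      _ = |∑ s ∈ S, v (s⁻¹ * x₀)| := by rw [h1]
      _ ≤ ∑ s ∈ S, |v (s⁻¹ * x₀)| := Finset.abs_sum_le_sum_abs _ _
      _ ≤ ∑ _s ∈ S, |v x₀| := Finset.sum_le_sum (fun s _ => hx₀ _ (Finset.mem_univ _))
      _ = (S.card : ℝ) * |v x₀| := by rw [Finset.sum_const, nsmul_eq_mul]
  exact le_of_mul_le_mul_right hμ hpos

lemma eigen_neg_card (hsym : ∀ s ∈ S, s⁻¹ ∈ S)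
    (hgen : Subgroup.closure (S : Set G) = ⊤)
    (hnb : ¬ ∃ f : G → Bool, ∀ x y : G, x * y⁻¹ ∈ S → f x ≠ f y)
    {v : G → ℝ} (hv : cayleyMatrix (S : Set G) *ᵥ v = (-(S.card : ℝ)) • v) :
    v = 0 := by
  classical
  by_contra hv0
  obtain ⟨x₀, -, hx₀⟩ := Finset.exists_max_image Finset.univ (fun x => |v x|)
    ⟨1, Finset.mem_univ 1⟩
  set M : ℝ := |v x₀| with hM
  have hpos : 0 < M := by
    by_contra h
    push_neg at h
    apply hv0
    funext y
    have h1 := hx₀ y (Finset.mem_univ y)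
    have := abs_nonneg (v y)
    simpa using le_antisymm (le_trans h1 h) (by positivity)
  have hsum : ∀ x, ∑ s ∈ S, v (s⁻¹ * x) = -(S.card : ℝ) * v x := by
    intro x
    have := congrFun hv x
    rw [cayley_mulVec] at this
    rw [this]; simp
  -- |v| is constant equal to M
  have habs : ∀ x, |v x| = M := by
    refine invariant_all S hsym hgen (fun x => |v x| = M) ?_ hM.symm
    intro x hx s hs
    have h1 : (S.card : ℝ) * M = |∑ s ∈ S, v (s⁻¹ * x)| := by
      rw [hsum x, abs_mul, abs_neg, Nat.abs_cast, hx]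
    have h2 : ∑ s ∈ S, |v (s⁻¹ * x)| = (S.card : ℝ) * M := by
      have hle : ∑ s ∈ S, |v (s⁻¹ * x)| ≤ (S.card : ℝ) * M := by
        calc ∑ s ∈ S, |v (s⁻¹ * x)| ≤ ∑ _s ∈ S, M :=
              Finset.sum_le_sum (fun s _ => hx₀ _ (Finset.mem_univ _))
          _ = (S.card : ℝ) * M := by rw [Finset.sum_const, nsmul_eq_mul]
      have hge : (S.card : ℝ) * M ≤ ∑ s ∈ S, |v (s⁻¹ * x)| := by
        rw [h1]; exact Finset.abs_sum_le_sum_abs _ _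
      linarith
    exact sum_eq_forall_eq S (fun s => |v (s⁻¹ * x)|) M
      (fun s _ => hx₀ _ (Finset.mem_univ _)) h2 s hs
  -- neighbours have opposite value
  have hflip : ∀ x, ∀ s ∈ S, v (s⁻¹ * x) = -(v x) := by
    intro x s hs
    have hM2 : v x * v x = M * M := by
      have h := habs x
      calc v x * v x = |v x| * |v x| := (abs_mul_abs_self (v x)).symm
        _ = M * M := by rw [h]
    have hsq : ∑ s ∈ S, (M * M + v (s⁻¹ * x) * v x) = 0 := by
      rw [Finset.sum_add_distrib, Finset.sum_const, ← Finset.sum_mul, hsum x]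
      rw [nsmul_eq_mul]
      nlinarith [hM2]
    have hterm : ∀ s ∈ S, M * M + v (s⁻¹ * x) * v x = 0 := by
      intro s hs
      have hnn : ∀ s ∈ S, 0 ≤ M * M + v (s⁻¹ * x) * v x := by
        intro t ht
        have h3 : |v (t⁻¹ * x) * v x| ≤ M * M := by
          rw [abs_mul, habs, habs]
        nlinarith [neg_abs_le (v (t⁻¹ * x) * v x)]
      exact (Finset.sum_eq_zero_iff_of_nonneg hnn).1 hsq s hs
    have h4 := hterm s hs
    have hvx : v x ≠ 0 := by
      intro h
      rw [h] at hM2; nlinarith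
    have : (v (s⁻¹ * x) + v x) * v x = 0 := by nlinarith [hM2]
    rcases mul_eq_zero.1 this with h | h
    · linarith
    · exact absurd h hvx
  -- build the bipartition
  apply hnb
  refine ⟨fun x => decide (0 < v x), ?_⟩
  intro x y hxy
  have hy : y = (x * y⁻¹)⁻¹ * x := by group
  have hvy : v y = -(v x) := by rw [hy]; exact hflip x _ hxy
  have hvx : v x ≠ 0 := by
    intro h
    have := habs x
    rw [h] at this
    simp at this
    exact absurd this.symm (ne_of_gt hpos)
  rcases lt_or_gt_of_ne hvx with h | h
  · have : 0 < v y := by rw [hvy]; linarith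
    simp [h, this, not_lt_of_gt h]
  · have : ¬ (0 < v y) := by rw [hvy]; linarith
    simp [h, this]


open Polynomial in
lemma pow_mulVec [DecidableEq G] (A : Matrix G G ℝ) {μ : ℝ} {v : G → ℝ} (hv : A *ᵥ v = μ • v) :
    ∀ n : ℕ, (A ^ n) *ᵥ v = μ ^ n • v := by
  intro n
  induction n with
  | zero => simp [Matrix.one_mulVec]
  | succ n ih =>
    rw [pow_succ, pow_succ, ← Matrix.mulVec_mulVec, hv, Matrix.mulVec_smul, ih,
      smul_smul, mul_comm]

open Polynomial in
lemma aeval_mulVec [DecidableEq G] (A : Matrix G G ℝ) {μ : ℝ} {v : G → ℝ} (hv : A *ᵥ v = μ • v)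
    (p : ℝ[X]) : (aeval A p) *ᵥ v = p.eval μ • v := by
  induction p using Polynomial.induction_on' with
  | add p q hp hq => rw [map_add, Matrix.add_mulVec, hp, hq, eval_add, add_smul]
  | monomial n a =>
    rw [aeval_monomial, eval_monomial, Algebra.algebraMap_eq_smul_one,
      Matrix.smul_mul, Matrix.one_mul, Matrix.smul_mulVec,
      pow_mulVec A hv, smul_smul]

lemma matrix_eq_zero_of_mulVec (N : Matrix G G ℝ) (h : ∀ u : G → ℝ, N *ᵥ u = 0) :
    N = 0 := by
  classical
  ext x y
  have := congrFun (h (Pi.single y 1)) x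
  rw [Matrix.mulVec_single_one] at this
  simpa using this

end Aux

open Polynomial Finset Matrix in
theorem card_dvd_factorial_of_not_bipartite (G : Type*) [Group G] [Fintype G]
    (S : Finset G)
    (hsym : ∀ s ∈ S, s⁻¹ ∈ S) (h1 : (1 : G) ∉ S)
    (hgen : Subgroup.closure (S : Set G) = ⊤)
    (hint : isIntegralMatrix (cayleyMatrix (S : Set G)))
    (hnb : ¬ ∃ f : G → Bool, ∀ x y : G, x * y⁻¹ ∈ S → f x ≠ f y) :
    Fintype.card G ∣ Nat.factorial (2 * S.card - 1) := by
  classical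
  set k := S.card with hk
  set A := cayleyMatrix (S : Set G) with hA
  -- symmetry of A
  have hAsymm : ∀ x y, A x y = A y x := by
    intro x y
    have hiff : x * y⁻¹ ∈ S ↔ y * x⁻¹ ∈ S := by
      constructor
      · intro h
        have := hsym _ h
        simpa [_root_.mul_inv_rev] using this
      · intro h
        have := hsym _ h
        simpa [_root_.mul_inv_rev] using this
    simp only [hA, cayleyMatrix, Finset.mem_coe]
    by_cases h : x * y⁻¹ ∈ S
    · rw [if_pos h, if_pos (hiff.1 h)]
    · rw [if_neg h, if_neg (fun hc => h (hiff.2 hc))]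
  have hAT : Aᵀ = A := by
    ext x y; simp [Matrix.transpose_apply, hAsymm x y]
  have hherm : A.IsHermitian := by
    ext x y
    simp [Matrix.conjTranspose_apply, hAsymm x y]
  have hsymT : (Matrix.toEuclideanLin A).IsSymmetric :=
    Matrix.isHermitian_iff_isSymmetric.mp hherm
  -- integral eigenvalues
  have hIntEig : ∀ (μ : ℝ) (w : G → ℝ), w ≠ 0 → A *ᵥ w = μ • w → ∃ z : ℤ, μ = z := by
    intro μ w hw0 hw
    unfold isIntegralMatrix at hint
    rw [Subsingleton.elim (Fintype.ofFinite G) ‹Fintype G›] at hint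
    apply hint
    refine Module.End.hasEigenvalue_of_hasEigenvector (x := w)
      ⟨Module.End.mem_eigenspace_iff.mpr ?_, hw0⟩
    rw [Matrix.toLin'_apply]
    exact hw
  -- the polynomial
  set p : ℝ[X] := ∏ d ∈ Finset.Icc 1 (2*k-1), (X - C ((k:ℝ) - d)) with hp
  set q : ℝ[X] := (X - C (k:ℝ)) * p with hq
  set M : Matrix G G ℝ := aeval A p with hM
  -- per-eigenpair annihilation
  have key : ∀ (μ : ℝ) (w : G → ℝ), A *ᵥ w = μ • w → (aeval A q) *ᵥ w = 0 := by
    intro μ w hw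
    by_cases hw0 : w = 0
    · simp [hw0]
    rw [aeval_mulVec A hw q]
    suffices hqz : q.eval μ = 0 by rw [hqz, zero_smul]
    rw [hq, eval_mul, eval_sub, eval_X, eval_C]
    by_cases hμk : μ = (k:ℝ)
    · rw [hμk]; simp
    obtain ⟨z, hz⟩ := hIntEig μ w hw0 hw
    have habs : |μ| ≤ (k:ℝ) := eigen_abs_le S hw0 hw
    have hneg : μ ≠ -(k:ℝ) := by
      intro h
      apply hw0
      refine eigen_neg_card S hsym hgen hnb ?_
      rw [← h]; exact hw
    have hzb : |z| ≤ (k:ℤ) := by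
      have : |(z:ℝ)| ≤ ((k:ℤ):ℝ) := by rw [← hz]; exact_mod_cast habs
      exact_mod_cast this
    have hz1 : z ≠ (k:ℤ) := by
      intro h; apply hμk; rw [hz, h]; push_cast; ring
    have hz2 : z ≠ -(k:ℤ) := by
      intro h; apply hneg; rw [hz, h]; push_cast; ring
    set d : ℕ := ((k:ℤ) - z).toNat with hd
    have habs' : -(k:ℤ) ≤ z ∧ z ≤ (k:ℤ) := abs_le.mp hzb
    have hdmem : d ∈ Finset.Icc 1 (2*k-1) := by
      rw [Finset.mem_Icc]
      omega
    have hfac : μ - ((k:ℝ) - (d:ℕ)) = 0 := by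
      have hdz : ((d:ℕ):ℤ) = (k:ℤ) - z := by omega
      have : ((d:ℕ):ℝ) = ((k:ℤ):ℝ) - (z:ℝ) := by exact_mod_cast congrArg (Int.cast : ℤ → ℝ) hdz
      rw [hz, this]
      push_cast
      ring
    have : p.eval μ = 0 := by
      rw [hp, eval_prod]
      refine Finset.prod_eq_zero hdmem ?_
      rw [eval_sub, eval_X, eval_C, hfac]
    rw [this, mul_zero]
  -- annihilation on all vectors via the spectral theorem
  have hspan : (⨆ μ : ℝ, Module.End.eigenspace (Matrix.toEuclideanLin A) μ) = ⊤ := by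
    rw [← Submodule.orthogonal_eq_bot_iff]
    exact hsymT.orthogonalComplement_iSup_eigenspaces_eq_bot
  have hann : ∀ u : G → ℝ, (aeval A q) *ᵥ u = 0 := by
    intro u
    have hu : ((WithLp.equiv 2 (G → ℝ)).symm u) ∈
        ⨆ μ : ℝ, Module.End.eigenspace (Matrix.toEuclideanLin A) μ := by
      rw [hspan]; exact Submodule.mem_top
    have hind := Submodule.iSup_induction
      (motive := fun w : EuclideanSpace ℝ G => (aeval A q) *ᵥ (WithLp.equiv 2 (G → ℝ) w) = 0)
      (Module.End.eigenspace (Matrix.toEuclideanLin A)) hu ?_ ?_ ?_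
    · simpa using hind
    · intro μ w hw
      have hTw := Module.End.mem_eigenspace_iff.mp hw
      have hw' : A *ᵥ (WithLp.equiv 2 (G → ℝ) w) = μ • (WithLp.equiv 2 (G → ℝ) w) := by
        have := congrArg (WithLp.equiv 2 (G → ℝ)) hTw
        simpa [Matrix.ofLp_toEuclideanLin_apply, WithLp.equiv_apply] using this
      exact key μ _ hw'
    · simp
    · intro a b ha hb
      rw [show WithLp.equiv 2 (G → ℝ) (a + b) = WithLp.equiv 2 (G → ℝ) a + WithLp.equiv 2 (G → ℝ) b from rfl, Matrix.mulVec_add, ha, hb, add_zero]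
  have hzero : aeval A q = 0 := matrix_eq_zero_of_mulVec _ hann
  -- factored forms
  have hAk : (aeval A (X - C (k:ℝ))) = A - (k:ℝ) • 1 := by
    rw [map_sub, aeval_X, aeval_C, Algebra.algebraMap_eq_smul_one]
  have hNM : (A - (k:ℝ) • 1) * M = 0 := by
    rw [← hAk, hM, ← _root_.map_mul, ← hq]; exact hzero
  have hMN : M * (A - (k:ℝ) • 1) = 0 := by
    rw [← hAk, hM, ← _root_.map_mul, mul_comm p (X - C (k:ℝ)), ← hq]; exact hzero
  -- columns of M are constant
  have hAM : A * M = (k:ℝ) • M := by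
    have h2 : A * M - ((k:ℝ) • (1 : Matrix G G ℝ)) * M = 0 := by
      rw [← Matrix.sub_mul]; exact hNM
    have h3 := sub_eq_zero.mp h2
    rw [h3, smul_mul_assoc, Matrix.one_mul]
  have hcol : ∀ y x x', M x y = M x' y := by
    intro y x x'
    have h1 : (fun x => M x y) = M *ᵥ Pi.single y 1 := by
      rw [Matrix.mulVec_single_one]
      funext x; simp [Matrix.transpose_apply]
    have hvcol : A *ᵥ (fun x => M x y) = (k:ℝ) • (fun x => M x y) := by
      rw [h1, Matrix.mulVec_mulVec, hAM, Matrix.smul_mulVec]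
    exact eigen_card_const S hsym hgen hvcol x x'
  -- rows of M are constant
  have hMA : M * A = (k:ℝ) • M := by
    have h2 : M * A - M * ((k:ℝ) • (1 : Matrix G G ℝ)) = 0 := by
      rw [← Matrix.mul_sub]; exact hMN
    have h3 := sub_eq_zero.mp h2
    rw [h3, mul_smul_comm, Matrix.mul_one]
  have hrow : ∀ x y y', M x y = M x y' := by
    intro x y y'
    have h1 : (M x) ᵥ* A = (M * A) x := by
      funext z; simp [Matrix.vecMul, Matrix.mul_apply, dotProduct]
    have h2 : A *ᵥ (M x) = (k:ℝ) • (M x) := by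
      have ht := Matrix.mulVec_transpose A (M x)
      rw [hAT] at ht
      rw [ht, h1, hMA]
      rfl
    exact eigen_card_const S hsym hgen h2 y y'
  -- integrality of entries of M
  set Az : Matrix G G ℤ := fun x y => if x * y⁻¹ ∈ S then 1 else 0 with hAz
  set pz : ℤ[X] := ∏ d ∈ Finset.Icc 1 (2*k-1), (X - C ((k:ℤ) - d)) with hpz
  set Mz : Matrix G G ℤ := aeval Az pz with hMz
  have hmap : ((Int.castRingHom ℝ).mapMatrix : Matrix G G ℤ →+* Matrix G G ℝ) Mz = M := by
    have hAmap : ((Int.castRingHom ℝ).mapMatrix : Matrix G G ℤ →+* Matrix G G ℝ) Az = A := by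
      ext x y
      rw [RingHom.mapMatrix_apply, Matrix.map_apply]
      simp [hAz, hA, cayleyMatrix, RingHom.mapMatrix_apply, Matrix.map_apply, apply_ite (Int.cast : ℤ → ℝ)]
    have hpmap : pz.map (Int.castRingHom ℝ) = p := by
      rw [hpz, Polynomial.map_prod, hp]
      refine Finset.prod_congr rfl (fun d _ => ?_)
      rw [Polynomial.map_sub, Polynomial.map_X, Polynomial.map_C, eq_intCast]
      push_cast
      ring
    rw [hMz, hM]
    have h1 : (aeval Az pz : Matrix G G ℤ) = Polynomial.eval₂ (algebraMap ℤ (Matrix G G ℤ)) Az pz :=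
      rfl
    rw [h1, Polynomial.hom_eval₂, ← hpmap]
    have h2 : (aeval A (pz.map (Int.castRingHom ℝ)) : Matrix G G ℝ)
        = Polynomial.eval₂ (algebraMap ℝ (Matrix G G ℝ)) A (pz.map (Int.castRingHom ℝ)) := rfl
    rw [h2, Polynomial.eval₂_map, hAmap]
    congr 1
    exact Subsingleton.elim _ _
  set c : ℤ := Mz 1 1 with hc
  have hconst : ∀ x y, M x y = (c : ℝ) := by
    intro x y
    rw [hrow x y 1, hcol 1 x 1, ← hmap]
    simp [RingHom.mapMatrix_apply, Matrix.map_apply, hc]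
  -- the all-ones vector
  have hone : A *ᵥ (fun _ => (1:ℝ)) = (k:ℝ) • (fun _ => (1:ℝ)) := by
    funext x
    rw [cayley_mulVec]
    simp [hk]
  have hM1 : M *ᵥ (fun _ => (1:ℝ)) = (((2*k-1).factorial : ℕ) : ℝ) • (fun _ => (1:ℝ)) := by
    rw [hM, aeval_mulVec A hone p]
    congr 1
    rw [hp, eval_prod]
    have h3 : ∀ d ∈ Finset.Icc 1 (2*k-1), ((X : ℝ[X]) - C ((k:ℝ) - d)).eval (k:ℝ) = (d:ℝ) := by
      intro d _
      rw [eval_sub, eval_X, eval_C]; ring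
    rw [Finset.prod_congr rfl h3, ← Nat.cast_prod]
    congr 1
    have : Finset.Icc 1 (2*k-1) = Finset.Ico 1 (2*k-1+1) := by
      rw [Finset.Ico_add_one_right_eq_Icc]
    rw [this]
    exact Finset.prod_Ico_id_eq_factorial (2*k-1)
  -- conclude
  have hfin := congrFun hM1 (1:G)
  have hL : (M *ᵥ (fun _ => (1:ℝ))) 1 = (Fintype.card G : ℝ) * (c:ℝ) := by
    simp [Matrix.mulVec, dotProduct, hconst, Finset.sum_const, Finset.card_univ,
      nsmul_eq_mul]
  rw [hL] at hfin
  have hR : ((Fintype.card G : ℤ) * c) = ((2*k-1).factorial : ℤ) := by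
    have hr : (Fintype.card G : ℝ) * (c:ℝ) = (((2*k-1).factorial : ℕ) : ℝ) := by
      rw [hfin]; simp
    exact_mod_cast hr
  have : ((2*k-1).factorial : ℤ) = (Fintype.card G : ℤ) * c := hR.symm
  exact_mod_cast Int.natCast_dvd_natCast.mp ⟨c, this⟩
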